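/- Conservation of charge for the graph: for every time t, the total charge is preserved, i.e. ∑_{i∈V} x_i^{t+1} = ∑_{i∈V} x_i^t. -/

import Mathlib

/-- **Conservation of charge for the graph.** In the charge redistribution process on a
finite simple graph `G` (every vertex having at least one neighbor), with threshold `ε`
and update rule
`x_i^{t+1} = (ε + (x_i^t − ε)/2)·z_i^t + x_i^t·(1 − z_i^t)
             + (1/2)·∑_{j ~ i} z_j^t·(x_j^t − ε)/d_j`
where `z_i^t = 1` iff `x_i^t > ε`, the total charge is preserved at every time `t`:
`∑_{i∈V} x_i^{t+1} = ∑_{i∈V} x_i^t`. -/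
theorem charge_conservation
    {V : Type*} [Fintype V] [DecidableEq V]
    (G : SimpleGraph V) [DecidableRel G.Adj]
    (hdeg : ∀ i : V, 0 < G.degree i)
    (ε : ℝ) (x : ℕ → V → ℝ)
    (hupd : ∀ (t : ℕ) (i : V),
      x (t + 1) i =
        (ε + (x t i - ε) / 2) * (if ε < x t i then (1 : ℝ) else 0)
          + x t i * (1 - (if ε < x t i then (1 : ℝ) else 0))
          + (1 / 2) * ∑ j ∈ G.neighborFinset i,
              (if ε < x t j then (1 : ℝ) else 0) * (x t j - ε) / (G.degree j))
    (t : ℕ) :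
    ∑ i, x (t + 1) i = ∑ i, x t i := by
  set f : V → ℝ := fun j => (if ε < x t j then (1 : ℝ) else 0) * (x t j - ε) / (G.degree j)
    with hf
  have hswap : ∑ i, ∑ j ∈ G.neighborFinset i, f j
      = ∑ j, (G.degree j : ℝ) * f j := by
    have h1 : ∀ i : V, ∑ j ∈ G.neighborFinset i, f j = ∑ j, if G.Adj i j then f j else 0 := by
      intro i
      rw [SimpleGraph.neighborFinset_eq_filter, Finset.sum_filter]
    simp only [h1]
    rw [Finset.sum_comm]
    apply Finset.sum_congr rfl
    intro j _
    have : ∀ i : V, (if G.Adj i j then f j else 0) = (if G.Adj j i then f j else 0) := by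
      intro i; simp [G.adj_comm]
    simp only [this]
    rw [← Finset.sum_filter, ← SimpleGraph.neighborFinset_eq_filter, Finset.sum_const,
      SimpleGraph.card_neighborFinset_eq_degree, nsmul_eq_mul]
  have hcancel : ∀ j : V, (G.degree j : ℝ) * f j
      = (if ε < x t j then (1 : ℝ) else 0) * (x t j - ε) := by
    intro j
    have hne : (G.degree j : ℝ) ≠ 0 := by exact_mod_cast (hdeg j).ne'
    simp only [hf]
    field_simp
  simp only [hupd, Finset.sum_add_distrib]
  rw [← Finset.mul_sum, hswap]
  simp only [hcancel]
  rw [Finset.mul_sum, ← Finset.sum_add_distrib, ← Finset.sum_add_distrib]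
  apply Finset.sum_congr rfl
  intro i _
  by_cases h : ε < x t i <;> simp [h] <;> ring
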